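/- Let L be a finite lattice, K = (L, L, ≤) its generic context, and S = [(A,B),(C,D)] a nested interval of B(K) ≅ L. Then the concept lattice of the enriched context K_S = (L, L, ≤ ∪ (C × B)) is not isomorphic to the factor poset L/θ_S, but is isomorphic to the Dedekind–MacNeille completion of (L/θ_S, ≤_θ). -/

import Mathlib

open Classical

variable {L : Type*}

/-- The interval relation `θ_S` for the single interval `S = [u,v]`. -/
def irel [Preorder L] (u v : L) (x y : L) : Prop :=
  x = y ∨ (x ∈ Set.Icc u v ∧ y ∈ Set.Icc u v)

/-- `θ_S` as a setoid. -/
def irelSetoid [Preorder L] (u v : L) : Setoid L where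
  r := irel u v
  iseqv := by
    constructor
    · intro x; exact Or.inl rfl
    · rintro x y (rfl | ⟨hx, hy⟩)
      · exact Or.inl rfl
      · exact Or.inr ⟨hy, hx⟩
    · rintro x y z (rfl | ⟨hx, hy⟩) h
      · exact h
      · rcases h with rfl | ⟨hy', hz⟩
        · exact Or.inr ⟨hx, hy⟩
        · exact Or.inr ⟨hx, hz⟩

/-- `x_θ`, the least element of the class of `x`. -/
noncomputable def ilow [Preorder L] (u v : L) (x : L) : L :=
  if x ∈ Set.Icc u v then u else x

/-- `x^θ`, the greatest element of the class of `x`. -/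
noncomputable def ihigh [Preorder L] (u v : L) (x : L) : L :=
  if x ∈ Set.Icc u v then v else x

/-- `S↓`, the elements outside `S` strictly below some element of `S`. -/
def iSdown [Preorder L] (u v : L) : Set L :=
  {z | z ∉ Set.Icc u v ∧ ∃ s ∈ Set.Icc u v, z < s}

/-- `S↑`, the elements outside `S` strictly above some element of `S`. -/
def iSupSet [Preorder L] (u v : L) : Set L :=
  {z | z ∉ Set.Icc u v ∧ ∃ s ∈ Set.Icc u v, s < z}

/-- `S∥`, the elements outside `S` incomparable to all of `S`. -/
def iSpar [Preorder L] (u v : L) : Set L :=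
  {z | z ∉ Set.Icc u v ∧ ∀ s ∈ Set.Icc u v, ¬ s < z ∧ ¬ z < s}

/-- The relation `≤_θ` on representatives. -/
def ile [Preorder L] (u v : L) (x y : L) : Prop :=
  ilow u v x ≤ ihigh u v y ∨ (x ∈ iSdown u v ∧ y ∈ iSupSet u v)

/-- The induced relation `≤_θ` on the factor set `L/θ`. -/
def iLeQ [Preorder L] (u v : L) (a b : Quotient (irelSetoid u v)) : Prop :=
  ∃ x y : L, a = Quotient.mk (irelSetoid u v) x ∧ b = Quotient.mk (irelSetoid u v) y ∧
    ile u v x y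

/-- `S` is a nested interval. -/
def iNested [Lattice L] (u v : L) : Prop :=
  ∃ x y a w : L, x ∈ iSpar u v ∧ y ∈ iSpar u v ∧ a ∈ iSupSet u v ∧ w ∈ iSdown u v ∧
    y = x ⊔ w ∧ x = y ⊓ a ∧ ¬ y ≤ a ∧ ¬ w ≤ x

/-- The enrichment `≤ ∪ (C × B)` of the incidence relation of the generic context `(L, L, ≤)`
by the interval `[(A,B),(C,D)]` of its concept lattice corresponding to the interval `[a,b]`
of `L` (here `C = ↓b` and `B = ↑a`). -/
def enr [Preorder L] (a b : L) (x y : L) : Prop := x ≤ y ∨ (x ≤ b ∧ a ≤ y)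

section Aux

variable {L : Type*} [Lattice L] {a b : L}

lemma mem_iSdown_iff' (hab : a ≤ b) {z : L} (hz : z ∉ Set.Icc a b) :
    z ∈ iSdown a b ↔ z ≤ b := by
  constructor
  · rintro ⟨-, s, hs, hlt⟩; exact hlt.le.trans hs.2
  · intro hzb
    refine ⟨hz, b, ⟨hab, le_rfl⟩, lt_of_le_of_ne hzb ?_⟩
    rintro rfl; exact hz ⟨hab, le_rfl⟩

lemma mem_iSupSet_iff' (hab : a ≤ b) {z : L} (hz : z ∉ Set.Icc a b) :
    z ∈ iSupSet a b ↔ a ≤ z := by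
  constructor
  · rintro ⟨-, s, hs, hlt⟩; exact hs.1.trans hlt.le
  · intro haz
    refine ⟨hz, a, ⟨le_rfl, hab⟩, lt_of_le_of_ne haz ?_⟩
    rintro rfl; exact hz ⟨le_rfl, hab⟩

lemma enr_iff_ile (hab : a ≤ b) (x y : L) : enr a b x y ↔ ile a b x y := by
  by_cases hx : x ∈ Set.Icc a b <;> by_cases hy : y ∈ Set.Icc a b
  · simp only [enr, ile, ilow, ihigh, if_pos hx, if_pos hy]
    constructor
    · intro _; exact Or.inl hab
    · intro _; exact Or.inr ⟨hx.2, hy.1⟩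
  · simp only [enr, ile, ilow, ihigh, if_pos hx, if_neg hy]
    constructor
    · rintro (h | ⟨-, h⟩)
      · exact Or.inl (hx.1.trans h)
      · exact Or.inl h
    · rintro (h | ⟨hd, -⟩)
      · exact Or.inr ⟨hx.2, h⟩
      · exact absurd hx hd.1
  · simp only [enr, ile, ilow, ihigh, if_neg hx, if_pos hy]
    constructor
    · rintro (h | ⟨h, -⟩)
      · exact Or.inl (h.trans hy.2)
      · exact Or.inl h
    · rintro (h | ⟨-, hu⟩)
      · exact Or.inr ⟨h, hy.1⟩
      · exact absurd hy hu.1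
  · simp only [enr, ile, ilow, ihigh, if_neg hx, if_neg hy]
    rw [mem_iSdown_iff' hab hx, mem_iSupSet_iff' hab hy]

lemma ilow_eq_of_irel {x x' : L} (h : irel a b x x') : ilow a b x = ilow a b x' := by
  rcases h with rfl | ⟨h1, h2⟩
  · rfl
  · simp only [ilow, if_pos h1, if_pos h2]

lemma ihigh_eq_of_irel {x x' : L} (h : irel a b x x') : ihigh a b x = ihigh a b x' := by
  rcases h with rfl | ⟨h1, h2⟩
  · rfl
  · simp only [ihigh, if_pos h1, if_pos h2]

lemma iSdown_iff_of_irel {x x' : L} (h : irel a b x x') :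
    x ∈ iSdown a b ↔ x' ∈ iSdown a b := by
  rcases h with rfl | ⟨h1, h2⟩
  · exact Iff.rfl
  · constructor
    · rintro ⟨hn, -⟩; exact absurd h1 hn
    · rintro ⟨hn, -⟩; exact absurd h2 hn

lemma iSupSet_iff_of_irel {x x' : L} (h : irel a b x x') :
    x ∈ iSupSet a b ↔ x' ∈ iSupSet a b := by
  rcases h with rfl | ⟨h1, h2⟩
  · exact Iff.rfl
  · constructor
    · rintro ⟨hn, -⟩; exact absurd h1 hn
    · rintro ⟨hn, -⟩; exact absurd h2 hn

lemma ile_invar {x x' y y' : L} (hx : irel a b x x') (hy : irel a b y y') :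
    ile a b x y ↔ ile a b x' y' := by
  simp only [ile]
  rw [ilow_eq_of_irel hx, ihigh_eq_of_irel hy]
  exact or_congr Iff.rfl (and_congr (iSdown_iff_of_irel hx) (iSupSet_iff_of_irel hy))

lemma enr_invar (hab : a ≤ b) {x x' y y' : L} (hx : irel a b x x') (hy : irel a b y y') :
    enr a b x y ↔ enr a b x' y' := by
  rw [enr_iff_ile hab, enr_iff_ile hab]; exact ile_invar hx hy

lemma iLeQ_mk' (x y : L) :
    iLeQ a b (Quotient.mk (irelSetoid a b) x) (Quotient.mk (irelSetoid a b) y) ↔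
      ile a b x y := by
  constructor
  · rintro ⟨x', y', hx, hy, h⟩
    exact (ile_invar (show irel a b x x' from Quotient.exact hx)
      (show irel a b y y' from Quotient.exact hy)).mpr h
  · intro h; exact ⟨x, y, rfl, rfl, h⟩

lemma iLeQ_mk_enr (hab : a ≤ b) (x y : L) :
    iLeQ a b (Quotient.mk (irelSetoid a b) x) (Quotient.mk (irelSetoid a b) y) ↔
      enr a b x y :=
  (iLeQ_mk' x y).trans (enr_iff_ile hab x y).symm

lemma mem_fst_iff (hab : a ≤ b) (c : Concept L L (enr a b)) {x x' : L}
    (h : irel a b x x') : x ∈ c.extent ↔ x' ∈ c.extent := by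
  rw [← c.lowerPolar_intent]
  constructor <;> intro hm y hy
  · exact (enr_invar hab h (Or.inl rfl)).mp (hm hy)
  · exact (enr_invar hab h (Or.inl rfl)).mpr (hm hy)

lemma mem_snd_iff (hab : a ≤ b) (c : Concept L L (enr a b)) {y y' : L}
    (h : irel a b y y') : y ∈ c.intent ↔ y' ∈ c.intent := by
  rw [← c.upperPolar_extent]
  constructor <;> intro hm x hx
  · exact (enr_invar hab (Or.inl rfl) h).mp (hm hx)
  · exact (enr_invar hab (Or.inl rfl) h).mpr (hm hx)

/-- The forward map of the isomorphism. -/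
noncomputable def Fmap (a b : L) (hab : a ≤ b) (c : Concept L L (enr a b)) :
    Concept (Quotient (irelSetoid a b)) (Quotient (irelSetoid a b)) (iLeQ a b) where
  extent := Quotient.mk (irelSetoid a b) '' c.extent
  intent := Quotient.mk (irelSetoid a b) '' c.intent
  upperPolar_extent := by
    ext β
    obtain ⟨y, rfl⟩ := Quotient.exists_rep β
    constructor
    · intro h
      have hy : y ∈ c.intent := by
        rw [← c.upperPolar_extent]
        intro x hx
        exact (iLeQ_mk_enr hab x y).mp (h ⟨x, hx, rfl⟩)
      exact Set.mem_image_of_mem _ hy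
    · rintro ⟨y', hy', hyy⟩ α hα
      obtain ⟨x, hx, rfl⟩ := hα
      have hy : y ∈ c.intent :=
        (mem_snd_iff hab c (show irel a b y' y from Quotient.exact hyy)).mp hy'
      rw [← c.upperPolar_extent] at hy
      exact (iLeQ_mk_enr hab x y).mpr (hy hx)
  lowerPolar_intent := by
    ext α
    obtain ⟨x, rfl⟩ := Quotient.exists_rep α
    constructor
    · intro h
      have hx : x ∈ c.extent := by
        rw [← c.lowerPolar_intent]
        intro y hy
        exact (iLeQ_mk_enr hab x y).mp (h ⟨y, hy, rfl⟩)
      exact Set.mem_image_of_mem _ hx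
    · rintro ⟨x', hx', hxx⟩ β hβ
      obtain ⟨y, hy, rfl⟩ := hβ
      have hx : x ∈ c.extent :=
        (mem_fst_iff hab c (show irel a b x' x from Quotient.exact hxx)).mp hx'
      rw [← c.lowerPolar_intent] at hx
      exact (iLeQ_mk_enr hab x y).mpr (hx hy)

/-- The backward map of the isomorphism. -/
noncomputable def Gmap (a b : L) (hab : a ≤ b)
    (d : Concept (Quotient (irelSetoid a b)) (Quotient (irelSetoid a b)) (iLeQ a b)) :
    Concept L L (enr a b) where
  extent := Quotient.mk (irelSetoid a b) ⁻¹' d.extent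
  intent := Quotient.mk (irelSetoid a b) ⁻¹' d.intent
  upperPolar_extent := by
    ext y
    constructor
    · intro h
      show Quotient.mk (irelSetoid a b) y ∈ d.intent
      rw [← d.upperPolar_extent]
      intro α hα
      obtain ⟨x, rfl⟩ := Quotient.exists_rep α
      exact (iLeQ_mk_enr hab x y).mpr (h hα)
    · intro h x hx
      have h' : Quotient.mk (irelSetoid a b) y ∈ d.intent := h
      rw [← d.upperPolar_extent] at h'
      exact (iLeQ_mk_enr hab x y).mp (h' hx)
  lowerPolar_intent := by
    ext x
    constructor
    · intro h
      show Quotient.mk (irelSetoid a b) x ∈ d.extent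
      rw [← d.lowerPolar_intent]
      intro β hβ
      obtain ⟨y, rfl⟩ := Quotient.exists_rep β
      exact (iLeQ_mk_enr hab x y).mpr (h hβ)
    · intro h y hy
      have h' : Quotient.mk (irelSetoid a b) x ∈ d.extent := h
      rw [← d.lowerPolar_intent] at h'
      exact (iLeQ_mk_enr hab x y).mp (h' hy)

end Aux

/-- If `S` is a nested interval of a finite lattice `L`, then the concept
lattice of the enriched generic context is not isomorphic to the factor poset `(L/θ_S, ≤_θ)`,
but is isomorphic to its Dedekind–MacNeille completion, i.e. the concept lattice of the
context `(L/θ_S, L/θ_S, ≤_θ)`. -/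
theorem enriched_concept_lattice_iso_dedekind_macneille {L : Type*} [Lattice L] [Finite L]
    (a b : L) (hab : a ≤ b) (hnested : iNested a b) :
    (¬ ∃ e : Concept L L (enr a b) ≃ Quotient (irelSetoid a b),
      ∀ c d : Concept L L (enr a b), c ≤ d ↔ iLeQ a b (e c) (e d)) ∧
    (∃ e : Concept L L (enr a b) ≃
        Concept (Quotient (irelSetoid a b)) (Quotient (irelSetoid a b)) (iLeQ a b),
      ∀ c d : Concept L L (enr a b), c ≤ d ↔ e c ≤ e d) := by
  constructor
  · -- Part 1: not isomorphic to the factor poset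
    rintro ⟨e, he⟩
    obtain ⟨x, y, a', w, hx, hy, ha', hw, hyxw, hxya, hyna, hwnx⟩ := hnested
    have hbicc : b ∈ Set.Icc a b := ⟨hab, le_rfl⟩
    have hxb : ¬ x ≤ b := by
      intro h
      rcases eq_or_lt_of_le h with rfl | h'
      · exact hx.1 hbicc
      · exact (hx.2 b hbicc).2 h'
    have ilexy : ile a b x y := by
      refine Or.inl ?_
      simp only [ilow, ihigh, if_neg hx.1, if_neg hy.1]
      rw [hyxw]; exact le_sup_left
    have ilewy : ile a b w y := by
      refine Or.inl ?_
      simp only [ilow, ihigh, if_neg hw.1, if_neg hy.1]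
      rw [hyxw]; exact le_sup_right
    have ilexa : ile a b x a' := by
      refine Or.inl ?_
      simp only [ilow, ihigh, if_neg hx.1, if_neg ha'.1]
      rw [hxya]; exact inf_le_right
    have ilewa : ile a b w a' := Or.inr ⟨hw, ha'⟩
    set qm : L → Quotient (irelSetoid a b) := Quotient.mk (irelSetoid a b) with hqm
    set c : Concept L L (enr a b) := e.symm (qm x) ⊔ e.symm (qm w) with hc
    have h1 : iLeQ a b (qm x) (e c) := by
      have := (he (e.symm (qm x)) c).mp le_sup_left
      rwa [e.apply_symm_apply] at this
    have h2 : iLeQ a b (qm w) (e c) := by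
      have := (he (e.symm (qm w)) c).mp le_sup_right
      rwa [e.apply_symm_apply] at this
    have hley : c ≤ e.symm (qm y) := by
      refine sup_le ?_ ?_
      · refine (he _ _).mpr ?_
        rw [e.apply_symm_apply, e.apply_symm_apply]
        exact (iLeQ_mk' x y).mpr ilexy
      · refine (he _ _).mpr ?_
        rw [e.apply_symm_apply, e.apply_symm_apply]
        exact (iLeQ_mk' w y).mpr ilewy
    have hlea : c ≤ e.symm (qm a') := by
      refine sup_le ?_ ?_
      · refine (he _ _).mpr ?_
        rw [e.apply_symm_apply, e.apply_symm_apply]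
        exact (iLeQ_mk' x a').mpr ilexa
      · refine (he _ _).mpr ?_
        rw [e.apply_symm_apply, e.apply_symm_apply]
        exact (iLeQ_mk' w a').mpr ilewa
    have h3 : iLeQ a b (e c) (qm y) := by
      have := (he c (e.symm (qm y))).mp hley
      rwa [e.apply_symm_apply] at this
    have h4 : iLeQ a b (e c) (qm a') := by
      have := (he c (e.symm (qm a'))).mp hlea
      rwa [e.apply_symm_apply] at this
    obtain ⟨t, ht⟩ := Quotient.exists_rep (e c)
    rw [← ht] at h1 h2 h3 h4
    have i1 : ile a b x t := (iLeQ_mk' x t).mp h1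
    have i2 : ile a b w t := (iLeQ_mk' w t).mp h2
    have i3 : ile a b t y := (iLeQ_mk' t y).mp h3
    have i4 : ile a b t a' := (iLeQ_mk' t a').mp h4
    have hdu : ∀ z : L, z ∈ iSdown a b → z ∈ iSupSet a b → False := by
      rintro z ⟨hz, s, hs, hzs⟩ ⟨-, s', hs', hs'z⟩
      exact hz ⟨hs'.1.trans hs'z.le, hzs.le.trans hs.2⟩
    have htI : t ∉ Set.Icc a b := by
      intro htI
      rcases i1 with h | ⟨-, hup⟩
      · simp only [ilow, ihigh, if_neg hx.1, if_pos htI] at h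
        exact hxb h
      · exact hup.1 htI
    have htd : t ∉ iSdown a b := by
      intro htd
      have htb : t ≤ b := by
        obtain ⟨-, s, hs, hts⟩ := htd
        exact hts.le.trans hs.2
      rcases i1 with h | ⟨-, hup⟩
      · simp only [ilow, ihigh, if_neg hx.1, if_neg htI] at h
        exact hxb (h.trans htb)
      · exact hdu t htd hup
    have hty : t ≤ y := by
      rcases i3 with h | ⟨hd, -⟩
      · simpa only [ilow, ihigh, if_neg htI, if_neg hy.1] using h
      · exact absurd hd htd
    have hta : t ≤ a' := by
      rcases i4 with h | ⟨hd, -⟩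
      · simpa only [ilow, ihigh, if_neg htI, if_neg ha'.1] using h
      · exact absurd hd htd
    have htx : t ≤ x := by rw [hxya]; exact le_inf hty hta
    have hxt : x ≤ t := by
      rcases i1 with h | ⟨hd, -⟩
      · simpa only [ilow, ihigh, if_neg hx.1, if_neg htI] using h
      · obtain ⟨-, s, hs, hlt⟩ := hd
        exact absurd hlt (hx.2 s hs).2
    have htx' : t = x := le_antisymm htx hxt
    rcases i2 with h | ⟨-, hup⟩
    · simp only [ilow, ihigh, if_neg hw.1, if_neg htI] at h
      exact hwnx (htx' ▸ h)
    · obtain ⟨-, s, hs, hlt⟩ := hup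
      exact (hx.2 s hs).1 (htx' ▸ hlt)
  · -- Part 2: isomorphic to the Dedekind–MacNeille completion
    refine ⟨⟨Fmap a b hab, Gmap a b hab, ?_, ?_⟩, ?_⟩
    · intro c
      apply Concept.ext
      show Quotient.mk (irelSetoid a b) ⁻¹' (Quotient.mk (irelSetoid a b) '' c.extent) = c.extent
      ext x
      constructor
      · rintro ⟨x', hx', hxx⟩
        exact (mem_fst_iff hab c (show irel a b x' x from Quotient.exact hxx)).mp hx'
      · intro hx
        exact ⟨x, hx, rfl⟩
    · intro d
      apply Concept.ext
      show Quotient.mk (irelSetoid a b) '' (Quotient.mk (irelSetoid a b) ⁻¹' d.extent) = d.extent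
      ext α
      constructor
      · rintro ⟨x, hx, rfl⟩
        exact hx
      · intro hα
        obtain ⟨x, rfl⟩ := Quotient.exists_rep α
        exact ⟨x, hα, rfl⟩
    · intro c d
      rw [← Concept.extent_subset_extent_iff, ← Concept.extent_subset_extent_iff]
      constructor
      · intro h
        exact Set.image_mono h
      · intro h x hx
        obtain ⟨x', hx', hxx⟩ := h (Set.mem_image_of_mem _ hx)
        exact (mem_fst_iff hab d (show irel a b x' x from Quotient.exact hxx)).mp hx'
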